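/- Let M₁ be a complex matrix indexed by S̄₁ ⊕ S with blocks A₁, B₁, C₁, D₁, and M₂ a complex matrix indexed by S̄₂ ⊕ S with blocks A₂, B₂, C₂, D₂. Suppose their isospectral reductions to S coincide as matrices over RatFunc ℂ: D₁ − C₁(A₁ − X·I)⁻¹B₁ = D₂ − C₂(A₂ − X·I)⁻¹B₂. Suppose moreover that for each i = 1, 2 no complex number λ is simultaneously a root of det(Mᵢ − λI) and of det(Aᵢ − λI) (i.e. σ(Mᵢ) ∩ σ(M_{S̄ᵢS̄ᵢ}) = ∅). Then det(M₁ − X·I) = det(M₂ − X·I) as polynomials; in particular M₁ and M₂ have the same eigenvalues with the same algebraic multiplicities. -/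

import Mathlib

open Matrix Polynomial

set_option synthInstance.maxHeartbeats 1000000
set_option maxHeartbeats 2000000

section aux

variable {n : Type*} [Fintype n] [DecidableEq n]

lemma aux_eq_neg_charmatrix (M : Matrix n n ℂ) :
    M.map (Polynomial.C : ℂ →+* Polynomial ℂ) - (Polynomial.X : Polynomial ℂ) • 1
      = -(charmatrix M) := by
  ext i j
  by_cases h : i = j <;>
    simp [charmatrix_apply, h, Matrix.one_apply, Matrix.smul_apply, Matrix.sub_apply]

lemma aux_det_eq (M : Matrix n n ℂ) :
    (M.map (Polynomial.C : ℂ →+* Polynomial ℂ)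
      - (Polynomial.X : Polynomial ℂ) • 1).det
      = (-1) ^ (Fintype.card n) * M.charpoly := by
  rw [aux_eq_neg_charmatrix, det_neg, Matrix.charpoly]

lemma aux_det_ne_zero (M : Matrix n n ℂ) :
    (M.map (Polynomial.C : ℂ →+* Polynomial ℂ)
      - (Polynomial.X : Polynomial ℂ) • 1).det ≠ 0 := by
  rw [aux_det_eq]
  exact mul_ne_zero (pow_ne_zero _ (by norm_num)) (M.charpoly_monic.ne_zero)

lemma aux_map_ratfunc (M : Matrix n n ℂ) :
    (M.map (Polynomial.C : ℂ →+* Polynomial ℂ)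
      - (Polynomial.X : Polynomial ℂ) • 1).map (algebraMap (Polynomial ℂ) (RatFunc ℂ))
      = M.map (RatFunc.C : ℂ →+* RatFunc ℂ) - (RatFunc.X : RatFunc ℂ) • 1 := by
  ext i j
  by_cases h : i = j <;>
    simp [h, Matrix.one_apply, Matrix.smul_apply, Matrix.sub_apply, Matrix.map_apply,
      RatFunc.algebraMap_C, RatFunc.algebraMap_X]

lemma coprime_of_no_common_root (p q : Polynomial ℂ) (hp : p ≠ 0)
    (h : ∀ l : ℂ, ¬(p.eval l = 0 ∧ q.eval l = 0)) : IsCoprime p q := by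
  classical
  by_contra hc
  rw [← EuclideanDomain.gcd_isUnit_iff] at hc
  have hg0 : EuclideanDomain.gcd p q ≠ 0 := by
    intro h0
    exact hp (EuclideanDomain.gcd_eq_zero_iff.mp h0).1
  have hdeg : (EuclideanDomain.gcd p q).degree ≠ 0 := by
    intro hd
    exact hc (Polynomial.isUnit_iff_degree_eq_zero.mpr hd)
  obtain ⟨x, hx⟩ := Complex.isAlgClosed.exists_root _ hdeg
  refine h x ⟨?_, ?_⟩
  · exact Polynomial.eval_eq_zero_of_dvd_of_eval_eq_zero (EuclideanDomain.gcd_dvd_left p q) hx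
  · exact Polynomial.eval_eq_zero_of_dvd_of_eval_eq_zero (EuclideanDomain.gcd_dvd_right p q) hx

end aux

lemma schur_step {S T : Type*} [Fintype S] [Fintype T] [DecidableEq S] [DecidableEq T]
    (A : Matrix T T ℂ) (B : Matrix T S ℂ) (C : Matrix S T ℂ) (D : Matrix S S ℂ) :
    algebraMap (Polynomial ℂ) (RatFunc ℂ)
        (((fromBlocks A B C D).map (Polynomial.C : ℂ →+* Polynomial ℂ)
          - (Polynomial.X : Polynomial ℂ) • 1).det)
      = algebraMap (Polynomial ℂ) (RatFunc ℂ)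
          ((A.map (Polynomial.C : ℂ →+* Polynomial ℂ)
            - (Polynomial.X : Polynomial ℂ) • 1).det)
        * ((D.map (RatFunc.C : ℂ →+* RatFunc ℂ)
            - C.map (RatFunc.C : ℂ →+* RatFunc ℂ)
              * (A.map (RatFunc.C : ℂ →+* RatFunc ℂ) - (RatFunc.X : RatFunc ℂ) • 1)⁻¹
              * B.map (RatFunc.C : ℂ →+* RatFunc ℂ))
          - (RatFunc.X : RatFunc ℂ) • 1).det := by
  set φ := algebraMap (Polynomial ℂ) (RatFunc ℂ)
  have hArdet : ((A.map (RatFunc.C : ℂ →+* RatFunc ℂ) - (RatFunc.X : RatFunc ℂ) • 1)).det ≠ 0 := by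
    rw [← aux_map_ratfunc, ← RingHom.mapMatrix_apply, ← RingHom.map_det]
    exact fun h => aux_det_ne_zero A (RatFunc.algebraMap_injective ℂ (by simpa using h))
  haveI : Invertible (A.map (RatFunc.C : ℂ →+* RatFunc ℂ) - (RatFunc.X : RatFunc ℂ) • 1) :=
    Matrix.invertibleOfIsUnitDet _ (isUnit_iff_ne_zero.mpr hArdet)
  have hblocks :
      (fromBlocks A B C D).map (RatFunc.C : ℂ →+* RatFunc ℂ) - (RatFunc.X : RatFunc ℂ) • 1
        = fromBlocks
            (A.map (RatFunc.C : ℂ →+* RatFunc ℂ) - (RatFunc.X : RatFunc ℂ) • 1)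
            (B.map (RatFunc.C : ℂ →+* RatFunc ℂ))
            (C.map (RatFunc.C : ℂ →+* RatFunc ℂ))
            (D.map (RatFunc.C : ℂ →+* RatFunc ℂ) - (RatFunc.X : RatFunc ℂ) • 1) := by
    rw [← fromBlocks_one (l := T) (m := S), fromBlocks_smul, fromBlocks_map]
    ext (i | i) (j | j) <;> simp [fromBlocks]
  rw [RingHom.map_det, RingHom.mapMatrix_apply, aux_map_ratfunc, hblocks, det_fromBlocks₁₁, invOf_eq_nonsing_inv,
    RingHom.map_det, RingHom.mapMatrix_apply, aux_map_ratfunc, sub_sub, sub_sub, add_comm ((RatFunc.X : RatFunc ℂ) • 1)]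

lemma aux_eval {n : Type*} [Fintype n] [DecidableEq n] (M : Matrix n n ℂ) (l : ℂ) :
    ((M.map (Polynomial.C : ℂ →+* Polynomial ℂ)
      - (Polynomial.X : Polynomial ℂ) • 1).det).eval l = (M - l • 1).det := by
  have := (Polynomial.evalRingHom l).map_det
    (M.map (Polynomial.C : ℂ →+* Polynomial ℂ) - (Polynomial.X : Polynomial ℂ) • 1)
  rw [show ((Polynomial.evalRingHom l) ((M.map (Polynomial.C : ℂ →+* Polynomial ℂ)
      - (Polynomial.X : Polynomial ℂ) • 1).det)) = ((M.map (Polynomial.C : ℂ →+* Polynomial ℂ)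
      - (Polynomial.X : Polynomial ℂ) • 1).det).eval l from rfl] at this
  rw [this, RingHom.mapMatrix_apply]
  congr 1
  ext i j
  by_cases h : i = j <;>
    simp [h, Matrix.one_apply, Matrix.smul_apply, Matrix.sub_apply, Matrix.map_apply]

lemma aux_leadingCoeff {n : Type*} [Fintype n] [DecidableEq n] (M : Matrix n n ℂ) :
    (M.map (Polynomial.C : ℂ →+* Polynomial ℂ)
      - (Polynomial.X : Polynomial ℂ) • 1).det.leadingCoeff = (-1) ^ (Fintype.card n) := by
  rw [aux_det_eq, show ((-1 : Polynomial ℂ) ^ Fintype.card n) = Polynomial.C ((-1 : ℂ) ^ Fintype.card n) by simp,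
    Polynomial.leadingCoeff_mul, Polynomial.leadingCoeff_C, M.charpoly_monic.leadingCoeff, mul_one]

lemma aux_natDegree {n : Type*} [Fintype n] [DecidableEq n] (M : Matrix n n ℂ) :
    (M.map (Polynomial.C : ℂ →+* Polynomial ℂ)
      - (Polynomial.X : Polynomial ℂ) • 1).det.natDegree = Fintype.card n := by
  rw [aux_det_eq, show ((-1 : Polynomial ℂ) ^ Fintype.card n) = Polynomial.C ((-1 : ℂ) ^ Fintype.card n) by simp,
    Polynomial.natDegree_C_mul (by simp [pow_ne_zero]), M.charpoly_natDegree_eq_dim]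

/-- Spectrally equivalent matrices whose spectra are disjoint from those of their removed
blocks have the same characteristic polynomial: if the isospectral reductions of `M₁` and
`M₂` to `S` coincide over `RatFunc ℂ` and `σ(Mᵢ) ∩ σ(Aᵢ) = ∅` for `i = 1, 2`, then
`det(M₁ - X I) = det(M₂ - X I)` as polynomials. -/
theorem spectrally_equivalent_same_charpoly
    {S Sbar1 Sbar2 : Type*} [Fintype S] [Fintype Sbar1] [Fintype Sbar2]
    [Nonempty S] [Nonempty Sbar1] [Nonempty Sbar2]
    [DecidableEq S] [DecidableEq Sbar1] [DecidableEq Sbar2]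
    (A₁ : Matrix Sbar1 Sbar1 ℂ) (B₁ : Matrix Sbar1 S ℂ) (C₁ : Matrix S Sbar1 ℂ)
    (D₁ : Matrix S S ℂ)
    (A₂ : Matrix Sbar2 Sbar2 ℂ) (B₂ : Matrix Sbar2 S ℂ) (C₂ : Matrix S Sbar2 ℂ)
    (D₂ : Matrix S S ℂ)
    (hR : D₁.map (RatFunc.C : ℂ →+* RatFunc ℂ)
        - C₁.map (RatFunc.C : ℂ →+* RatFunc ℂ)
          * (A₁.map (RatFunc.C : ℂ →+* RatFunc ℂ)
              - (RatFunc.X : RatFunc ℂ) • (1 : Matrix Sbar1 Sbar1 (RatFunc ℂ)))⁻¹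
          * B₁.map (RatFunc.C : ℂ →+* RatFunc ℂ)
      = D₂.map (RatFunc.C : ℂ →+* RatFunc ℂ)
        - C₂.map (RatFunc.C : ℂ →+* RatFunc ℂ)
          * (A₂.map (RatFunc.C : ℂ →+* RatFunc ℂ)
              - (RatFunc.X : RatFunc ℂ) • (1 : Matrix Sbar2 Sbar2 (RatFunc ℂ)))⁻¹
          * B₂.map (RatFunc.C : ℂ →+* RatFunc ℂ))
    (h1 : ∀ l : ℂ,
      ¬((fromBlocks A₁ B₁ C₁ D₁ - l • 1).det = 0 ∧ (A₁ - l • 1).det = 0))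
    (h2 : ∀ l : ℂ,
      ¬((fromBlocks A₂ B₂ C₂ D₂ - l • 1).det = 0 ∧ (A₂ - l • 1).det = 0)) :
    ((fromBlocks A₁ B₁ C₁ D₁).map (Polynomial.C : ℂ →+* Polynomial ℂ)
        - (Polynomial.X : Polynomial ℂ)
          • (1 : Matrix (Sbar1 ⊕ S) (Sbar1 ⊕ S) (Polynomial ℂ))).det
      = ((fromBlocks A₂ B₂ C₂ D₂).map (Polynomial.C : ℂ →+* Polynomial ℂ)
        - (Polynomial.X : Polynomial ℂ)
          • (1 : Matrix (Sbar2 ⊕ S) (Sbar2 ⊕ S) (Polynomial ℂ))).det := by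
  classical
  set p₁ := ((fromBlocks A₁ B₁ C₁ D₁).map (Polynomial.C : ℂ →+* Polynomial ℂ)
      - (Polynomial.X : Polynomial ℂ) • 1).det with hp₁
  set p₂ := ((fromBlocks A₂ B₂ C₂ D₂).map (Polynomial.C : ℂ →+* Polynomial ℂ)
      - (Polynomial.X : Polynomial ℂ) • 1).det with hp₂
  set q₁ := ((A₁.map (Polynomial.C : ℂ →+* Polynomial ℂ)
      - (Polynomial.X : Polynomial ℂ) • 1).det) with hq₁
  set q₂ := ((A₂.map (Polynomial.C : ℂ →+* Polynomial ℂ)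
      - (Polynomial.X : Polynomial ℂ) • 1).det) with hq₂
  have hs1 := schur_step A₁ B₁ C₁ D₁
  have hs2 := schur_step A₂ B₂ C₂ D₂
  rw [hR] at hs1
  have key : p₁ * q₂ = p₂ * q₁ := by
    apply RatFunc.algebraMap_injective ℂ
    rw [_root_.map_mul, _root_.map_mul, hs1, hs2]
    ring
  have hcop1 : IsCoprime p₁ q₁ :=
    coprime_of_no_common_root _ _ (aux_det_ne_zero _)
      (fun l hl => h1 l ⟨by rw [← aux_eval (fromBlocks A₁ B₁ C₁ D₁) l]; exact hl.1,
        by rw [← aux_eval A₁ l]; exact hl.2⟩)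
  have hcop2 : IsCoprime p₂ q₂ :=
    coprime_of_no_common_root _ _ (aux_det_ne_zero _)
      (fun l hl => h2 l ⟨by rw [← aux_eval (fromBlocks A₂ B₂ C₂ D₂) l]; exact hl.1,
        by rw [← aux_eval A₂ l]; exact hl.2⟩)
  have d12 : p₁ ∣ p₂ := hcop1.dvd_of_dvd_mul_right ⟨q₂, key.symm⟩
  have d21 : p₂ ∣ p₁ := hcop2.dvd_of_dvd_mul_right ⟨q₁, key⟩
  obtain ⟨u, hu⟩ := associated_of_dvd_dvd d12 d21
  obtain ⟨c, hc, hcu⟩ := Polynomial.isUnit_iff.mp u.isUnit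
  have hp2 : p₂ = p₁ * Polynomial.C c := by rw [hcu, hu]
  have hn : Fintype.card (Sbar1 ⊕ S) = Fintype.card (Sbar2 ⊕ S) := by
    rw [← aux_natDegree (fromBlocks A₁ B₁ C₁ D₁), ← aux_natDegree (fromBlocks A₂ B₂ C₂ D₂),
      ← hp₁, ← hp₂, hp2, Polynomial.natDegree_mul (aux_det_ne_zero _) (by simpa using hc.ne_zero)]
    simp
    rfl
  have hlc : p₂.leadingCoeff = p₁.leadingCoeff * c := by
    rw [hp2, Polynomial.leadingCoeff_mul, Polynomial.leadingCoeff_C]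
  rw [hp₁, hp₂] at hlc ⊢
  rw [aux_leadingCoeff, aux_leadingCoeff, hn] at hlc
  have hc1 : c = 1 := by
    have h0 : ((-1 : ℂ) ^ Fintype.card (Sbar2 ⊕ S)) ≠ 0 := by simp
    rcases mul_right_eq_self₀.mp hlc.symm with h | h
    · exact h
    · exact absurd h h0
  rw [← hp₁, ← hp₂, hp2, hc1, Polynomial.C_1, mul_one]
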